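/- Under the hypotheses of Proposition 2, if additionally 3H(t₀)² < min{lim_{φ→+∞} V(φ), lim_{φ→−∞} V(φ)}, then lim_{t→∞} φ(t) = 0 and lim_{t→∞} H(t) = 0. -/

import Mathlib

open Filter Set Topology
open intervalIntegral

lemma drift (f f' : ℝ → ℝ) (T c : ℝ)
    (h : ∀ t, T ≤ t → HasDerivAt f (f' t) t)
    (hb : ∀ t, T ≤ t → f' t ≤ -c) :
    ∀ t, T ≤ t → f t ≤ f T - c * (t - T) := by
  intro t ht
  have H : AntitoneOn (fun s => f s + c * s) (Ici T) := by
    apply antitoneOn_of_deriv_nonpos (convex_Ici T)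
    · intro s hs
      exact ((h s hs).continuousAt.add (continuousAt_const.mul continuousAt_id)).continuousWithinAt
    · intro s hs
      rw [interior_Ici] at hs
      exact (((h s hs.le).add ((hasDerivAt_id s).const_mul c)).differentiableAt).differentiableWithinAt
    · intro s hs
      rw [interior_Ici] at hs
      have hd : HasDerivAt (fun s => f s + c * s) (f' s + c) s := by
        exact ((h s hs.le).add ((hasDerivAt_id s).const_mul c)).congr_deriv (by ring)
      rw [hd.deriv]
      have := hb s hs.le
      linarith
  have := H (self_mem_Ici) (mem_Ici.2 ht) ht
  simp only at this
  linarith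

lemma barbalat (g g' : ℝ → ℝ) (a B L : ℝ) (hL : 0 < L)
    (hg0 : ∀ t, a ≤ t → 0 ≤ g t)
    (hg : ∀ t, a ≤ t → HasDerivAt g (g' t) t)
    (hg' : ∀ t, a ≤ t → |g' t| ≤ L)
    (hB : ∀ T, a ≤ T → (∫ s in a..T, g s) ≤ B) :
    Tendsto g atTop (nhds 0) := by
  have hcont : ∀ u v, a ≤ u → u ≤ v → IntervalIntegrable g MeasureTheory.volume u v := by
    intro u v hu huv
    apply ContinuousOn.intervalIntegrable
    intro s hs
    rw [uIcc_of_le huv] at hs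
    exact (hg s (le_trans hu hs.1)).continuousAt.continuousWithinAt
  rw [Metric.tendsto_atTop]
  by_contra hcon
  push_neg at hcon
  obtain ⟨ε, hε, hfreq⟩ := hcon
  set δ : ℝ := ε^2 / (2*L) with hδdef
  have hδ : 0 < δ := by positivity
  have key : ∀ t, a ≤ t → ε ≤ g t → δ ≤ ∫ s in t..(t + ε/L), g s := by
    intro t ht hgt
    have hd : 0 < ε / L := by positivity
    have hlow : ∀ s, t ≤ s → g t - L * (s - t) ≤ g s := by
      intro s hs
      have := drift (fun u => -g u) (fun u => -g' u) t (-L)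
        (fun u hu => (hg u (le_trans ht hu)).neg)
        (fun u hu => by
          have := abs_le.1 (hg' u (le_trans ht hu))
          simp only [neg_neg]; linarith) s hs
      linarith
    have hmono : (∫ s in t..(t + ε/L), (ε - L * (s - t))) ≤ ∫ s in t..(t + ε/L), g s := by
      apply integral_mono_on (by linarith)
      · exact (Continuous.continuousOn (by continuity)).intervalIntegrable
      · exact hcont t (t + ε/L) ht (by linarith)
      · intro s hs
        have h1 := hlow s hs.1
        linarith
    have hcomp : (∫ s in t..(t + ε/L), (ε - L * (s - t))) = δ := by
      have : ∀ s : ℝ, ε - L * (s - t) = (ε + L*t) - L * s := by intro s; ring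
      simp_rw [this]
      rw [integral_sub intervalIntegrable_const (by
        exact (continuous_const.mul continuous_id).continuousOn.intervalIntegrable),
        integral_const, integral_const_mul, integral_id]
      field_simp
      rw [hδdef]
      field_simp
      linear_combination (2*ε^2 + 2*L*ε*t) * (mul_inv_cancel₀ (ne_of_gt hL))
    linarith
  have grow : ∀ n : ℕ, ∃ T, a ≤ T ∧ (n : ℝ) * δ ≤ ∫ s in a..T, g s := by
    intro n
    induction n with
    | zero => exact ⟨a, le_refl a, by simp⟩
    | succ n ih =>
      obtain ⟨T, hT, hI⟩ := ih
      obtain ⟨t, ht, hgt⟩ := hfreq T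
      have hta : a ≤ t := le_trans hT ht
      have hgtε : ε ≤ g t := by
        rwa [Real.dist_eq, sub_zero, abs_of_nonneg (hg0 t hta)] at hgt
      have hd : 0 < ε/L := by positivity
      refine ⟨t + ε/L, by linarith, ?_⟩
      have h1 := key t hta hgtε
      have split1 : (∫ s in a..t, g s) + (∫ s in t..(t+ε/L), g s) = ∫ s in a..(t+ε/L), g s :=
        integral_add_adjacent_intervals (hcont a t (le_refl a) hta) (hcont t (t+ε/L) hta (by linarith))
      have split2 : (∫ s in a..T, g s) + (∫ s in T..t, g s) = ∫ s in a..t, g s :=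
        integral_add_adjacent_intervals (hcont a T (le_refl a) hT) (hcont T t hT ht)
      have hmid : 0 ≤ ∫ s in T..t, g s := by
        apply integral_nonneg ht
        intro u hu
        exact hg0 u (le_trans hT hu.1)
      push_cast
      linarith
  obtain ⟨n, hn⟩ := exists_nat_gt (B / δ)
  obtain ⟨T, hT, hI⟩ := grow n
  have h2 := hB T hT
  have h3 : B < (n:ℝ) * δ := by
    rw [div_lt_iff₀ hδ] at hn; linarith
  linarith



set_option maxHeartbeats 4000000

/-- Proposition 1: if `V ≥ 0` with `V(φ) = 0 ⟺ φ = 0`, `V'` is bounded on every set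
on which `V` is bounded, and `χ'/χ ≤ 2K/((2−γ)(4−3γ))` for some constant `K ≠ 0`,
then along any solution of the cosmological system with `H(t₀) > 0`,
`(ρ_m, ρ_r, y) → (0, 0, 0)` as `t → ∞`. -/
theorem stmt5 (H ρm ρr y φ V χ : ℝ → ℝ) (γ t₀ K : ℝ)
    (hγ0 : 0 < γ) (hγ2 : γ < 2) (hγ43 : γ ≠ 4/3)
    (hχpos : ∀ s, 0 < χ s)
    (hVC2 : ContDiff ℝ 2 V) (hχC2 : ContDiff ℝ 2 χ)
    (hVnn : ∀ s, 0 ≤ V s)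
    (hVzero : ∀ s, V s = 0 ↔ s = 0)
    (hV'bdd : ∀ A : Set ℝ, (∃ B, ∀ s ∈ A, V s ≤ B) → ∃ B', ∀ s ∈ A, |deriv V s| ≤ B')
    (hK : K ≠ 0)
    (hχbd : ∀ s, deriv χ s / χ s ≤ 2*K / ((2-γ)*(4-3*γ)))
    (hH : ∀ t, t₀ ≤ t →
      HasDerivAt H (-(1/2) * (γ * ρm t + (4/3) * ρr t + (y t)^2)) t)
    (hm : ∀ t, t₀ ≤ t →
      HasDerivAt ρm (-3*γ*H t*ρm t - (1/2)*(4-3*γ)*ρm t*y t*(deriv χ (φ t) / χ (φ t))) t)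
    (hr : ∀ t, t₀ ≤ t → HasDerivAt ρr (-4*H t*ρr t) t)
    (hy : ∀ t, t₀ ≤ t →
      HasDerivAt y (-3*H t*y t - deriv V (φ t) + (1/2)*(4-3*γ)*ρm t*(deriv χ (φ t) / χ (φ t))) t)
    (hφ : ∀ t, t₀ ≤ t → HasDerivAt φ (y t) t)
    (hconstraint : ∀ t, t₀ ≤ t →
      3*(H t)^2 = (1/2)*(y t)^2 + V (φ t) + ρm t + ρr t)
    (hmnn : ∀ t, t₀ ≤ t → 0 ≤ ρm t)
    (hrnn : ∀ t, t₀ ≤ t → 0 ≤ ρr t)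
    (hH0 : 0 < H t₀)
    (hVinc : ∀ s, 0 < s → 0 < deriv V s)
    (hVdec : ∀ s, s < 0 → deriv V s < 0)
    (Lp Lm : EReal) (hLp0 : (0 : EReal) < Lp) (hLm0 : (0 : EReal) < Lm)
    (hLp : Tendsto (fun s => (V s : EReal)) atTop (nhds Lp))
    (hLm : Tendsto (fun s => (V s : EReal)) atBot (nhds Lm))
    (hinit : ((3 * (H t₀)^2 : ℝ) : EReal) < min Lp Lm) :
    Tendsto φ atTop (nhds 0) ∧ Tendsto H atTop (nhds 0) := by
  -- derivative of V and χ'/χ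
  have hVd : Differentiable ℝ V := hVC2.differentiable two_ne_zero
  have hV'c : Continuous (deriv V) := hVC2.continuous_deriv one_le_two
  have hχ'c : Continuous (fun s => deriv χ s / χ s) :=
    (hχC2.continuous_deriv one_le_two).div hχC2.continuous (fun s => (hχpos s).ne')
  have hVφ : ∀ t, t₀ ≤ t → HasDerivAt (fun u => V (φ u)) (deriv V (φ t) * y t) t := by
    intro t ht
    exact (hVd (φ t)).hasDerivAt.comp t (hφ t ht)
  -- energy
  set E : ℝ → ℝ := fun t => (1/2)*(y t)^2 + V (φ t) + ρm t + ρr t with hEdef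
  set E' : ℝ → ℝ := fun t => -(H t) * (3*(y t)^2 + 3*γ*ρm t + 4*ρr t) with hE'def
  have hE : ∀ t, t₀ ≤ t → HasDerivAt E (E' t) t := by
    intro t ht
    have h1 : HasDerivAt (fun u => (1/2)*(y u)^2)
        ((1/2)*(2*y t*(-3*H t*y t - deriv V (φ t) + (1/2)*(4-3*γ)*ρm t*(deriv χ (φ t) / χ (φ t))))) t := by
      exact (((hy t ht).pow 2).const_mul (1/2)).congr_deriv (by ring)
    have h2 := (((h1.add (hVφ t ht)).add (hm t ht)).add (hr t ht))
    convert h2 using 1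
    · rfl
    · rfl
    · rfl
    · simp only [hE'def]
      ring
  have hE2 : ∀ t, t₀ ≤ t → E t = 3*(H t)^2 := fun t ht => (hconstraint t ht).symm
  have hEnn : ∀ t, t₀ ≤ t → 0 ≤ E t := by
    intro t ht
    have := hVnn (φ t); have := hmnn t ht; have := hrnn t ht
    have : 0 ≤ (y t)^2 := sq_nonneg _
    simp only [hEdef]
    nlinarith [hVnn (φ t), hmnn t ht, hrnn t ht, sq_nonneg (y t)]
  -- H is antitone on [t₀, ∞)
  have hHanti : AntitoneOn H (Ici t₀) := by
    apply antitoneOn_of_deriv_nonpos (convex_Ici t₀)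
    · exact fun s hs => (hH s hs).continuousAt.continuousWithinAt
    · intro s hs
      rw [interior_Ici] at hs
      exact (hH s hs.le).differentiableAt.differentiableWithinAt
    · intro s hs
      rw [interior_Ici] at hs
      rw [(hH s hs.le).deriv]
      nlinarith [hmnn s hs.le, hrnn s hs.le, sq_nonneg (y s)]
  by_cases hpos : ∀ t, t₀ ≤ t → 0 < H t
  case neg =>
    -- H reaches 0; by Gronwall everything is identically 0 afterwards
    push_neg at hpos
    obtain ⟨t₁, ht₁, hH1⟩ := hpos
    obtain ⟨t₂, ht₂, hH2⟩ : ∃ t₂ ∈ Icc t₀ t₁, H t₂ = 0 := by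
      apply intermediate_value_Icc' ht₁
      · exact fun s hs => (hH s hs.1).continuousAt.continuousWithinAt
      · exact ⟨hH1, hH0.le⟩
    have hEzero : ∀ b, t₂ ≤ b → E b = 0 := by
      intro b hb
      have hKnn : (0:ℝ) ≤ -H b := by
        have := hHanti (mem_Ici.2 ht₂.1) (mem_Ici.2 (le_trans ht₂.1 hb)) hb
        linarith [hH2 ▸ this]
      have key := norm_le_gronwallBound_of_norm_deriv_right_le
        (f := E) (f' := E') (δ := 0) (K := 6 * (-H b)) (ε := 0) (a := t₂) (b := b)
        (fun s hs => (hE s (le_trans ht₂.1 hs.1)).continuousAt.continuousWithinAt)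
        (fun s hs => (hE s (le_trans ht₂.1 hs.1)).hasDerivWithinAt)
        (by
          rw [Real.norm_eq_abs, hE2 t₂ ht₂.1, hH2]
          norm_num)
        ?_ b ⟨hb, le_refl b⟩
      · rw [Real.norm_eq_abs, gronwallBound_ε0] at key
        have := abs_nonneg (E b)
        have h0 : |E b| ≤ 0 := by simpa using key
        have := abs_eq_zero.1 (le_antisymm h0 (abs_nonneg _))
        exact this
      · intro x hx
        have hxt₀ : t₀ ≤ x := le_trans ht₂.1 hx.1
        have hHx0 : H x ≤ 0 := by
          have := hHanti (mem_Ici.2 ht₂.1) (mem_Ici.2 hxt₀) hx.1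
          linarith [hH2 ▸ this]
        have hHxb : H b ≤ H x := hHanti (mem_Ici.2 hxt₀) (mem_Ici.2 (le_trans ht₂.1 hb)) hx.2.le
        have hsum : 0 ≤ 3*(y x)^2 + 3*γ*ρm x + 4*ρr x := by
          nlinarith [hmnn x hxt₀, hrnn x hxt₀, sq_nonneg (y x)]
        have hsum6 : 3*(y x)^2 + 3*γ*ρm x + 4*ρr x ≤ 6 * E x := by
          simp only [hEdef]
          nlinarith [hmnn x hxt₀, hrnn x hxt₀, hVnn (φ x), sq_nonneg (y x)]
        rw [Real.norm_eq_abs, Real.norm_eq_abs]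
        simp only [hE'def]
        rw [abs_mul, abs_of_nonneg hsum, abs_of_nonneg (by linarith : (0:ℝ) ≤ -H x),
          abs_of_nonneg (hEnn x hxt₀)]
        have hEnnx := hEnn x hxt₀
        nlinarith
    have heq : ∀ b, t₂ ≤ b → H b = 0 ∧ φ b = 0 := by
      intro b hb
      have hb₀ : t₀ ≤ b := le_trans ht₂.1 hb
      have hEb := hEzero b hb
      have h3 : 3*(H b)^2 = 0 := by rw [← hE2 b hb₀, hEb]
      constructor
      · have : (H b)^2 = 0 := by linarith
        exact pow_eq_zero_iff (n := 2) (by norm_num) |>.1 this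
      · have hVb : V (φ b) = 0 := by
          have := hmnn b hb₀; have := hrnn b hb₀; have := hVnn (φ b)
          have := sq_nonneg (y b)
          simp only [hEdef] at hEb
          nlinarith
        exact (hVzero (φ b)).1 hVb
    constructor
    · apply Tendsto.congr' _ (tendsto_const_nhds (x := (0:ℝ)))
      filter_upwards [eventually_ge_atTop t₂] with b hb
      exact ((heq b hb).2).symm
    · apply Tendsto.congr' _ (tendsto_const_nhds (x := (0:ℝ)))
      filter_upwards [eventually_ge_atTop t₂] with b hb
      exact ((heq b hb).1).symm
  case pos =>
    have hHle : ∀ t, t₀ ≤ t → H t ≤ H t₀ := fun t ht =>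
      hHanti (self_mem_Ici) (mem_Ici.2 ht) ht
    have hEb : ∀ t, t₀ ≤ t → E t ≤ 3*(H t₀)^2 := by
      intro t ht
      rw [hE2 t ht]
      nlinarith [hpos t ht, hHle t ht]
    have hVb : ∀ t, t₀ ≤ t → V (φ t) ≤ 3*(H t₀)^2 := by
      intro t ht
      have := hEb t ht
      simp only [hEdef] at this
      nlinarith [hmnn t ht, hrnn t ht, sq_nonneg (y t)]
    -- φ is confined to a compact interval
    have hcoe : ((3 * (H t₀)^2 : ℝ) : EReal) < Lp := lt_of_lt_of_le hinit (min_le_left _ _)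
    have hcoe' : ((3 * (H t₀)^2 : ℝ) : EReal) < Lm := lt_of_lt_of_le hinit (min_le_right _ _)
    obtain ⟨Mp, hMp⟩ := (hLp.eventually (Ioi_mem_nhds hcoe)).exists_forall_of_atTop
    obtain ⟨Mm, hMm⟩ := (hLm.eventually (Ioi_mem_nhds hcoe')).exists_forall_of_atBot
    set M : ℝ := max 1 (max Mp (-Mm)) with hMdef
    have hM1 : (1:ℝ) ≤ M := le_max_left _ _
    have hM : ∀ t, t₀ ≤ t → φ t ∈ Icc (-M) M := by
      intro t ht
      constructor
      · by_contra hc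
        push_neg at hc
        have h1 : φ t ≤ Mm := by
          have : -Mm ≤ M := le_trans (le_max_right _ _) (le_max_right _ _)
          linarith
        have := hMm (φ t) h1
        rw [EReal.coe_lt_coe_iff] at this
        linarith [hVb t ht]
      · by_contra hc
        push_neg at hc
        have h1 : Mp ≤ φ t := by
          have : Mp ≤ M := le_trans (le_max_left _ _) (le_max_right _ _)
          linarith
        have := hMp (φ t) h1
        rw [EReal.coe_lt_coe_iff] at this
        linarith [hVb t ht]
    -- limit of H
    set h : ℝ → ℝ := fun t => H (max t t₀) with hhdef
    have hhanti : Antitone h := by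
      intro u v huv
      exact hHanti (mem_Ici.2 (le_max_right u t₀)) (mem_Ici.2 (le_max_right v t₀))
        (max_le_max huv (le_refl t₀))
    have hhbdd : BddBelow (range h) := by
      refine ⟨0, ?_⟩
      rintro x ⟨u, rfl⟩
      exact (hpos (max u t₀) (le_max_right u t₀)).le
    set Hm : ℝ := ⨅ u, h u with hHmdef
    have hHmtendsto : Tendsto H atTop (nhds Hm) := by
      apply Tendsto.congr' _ (tendsto_atTop_ciInf hhanti hhbdd)
      filter_upwards [eventually_ge_atTop t₀] with u hu
      simp only [hhdef, max_eq_left hu]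
    have hHmnn : 0 ≤ Hm := le_ciInf fun u => (hpos (max u t₀) (le_max_right u t₀)).le
    have hEtendsto : Tendsto E atTop (nhds (3*Hm^2)) := by
      apply Tendsto.congr' _ ((hHmtendsto.pow 2).const_mul 3)
      filter_upwards [eventually_ge_atTop t₀] with u hu
      exact (hE2 u hu).symm
    rcases eq_or_lt_of_le hHmnn with hHm0 | hHmpos
    · -- H → 0 and V(φ) → 0, hence φ → 0
      rw [← hHm0] at hHmtendsto hEtendsto
      norm_num at hEtendsto
      have hVφ0 : Tendsto (fun t => V (φ t)) atTop (nhds 0) := by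
        apply tendsto_of_tendsto_of_tendsto_of_le_of_le' tendsto_const_nhds hEtendsto
        · filter_upwards with t using hVnn (φ t)
        · filter_upwards [eventually_ge_atTop t₀] with t ht
          simp only [hEdef]
          nlinarith [hmnn t ht, hrnn t ht, sq_nonneg (y t)]
      refine ⟨?_, hHmtendsto⟩
      rw [Metric.tendsto_atTop]
      intro ε hε
      by_cases hKe : (Icc (-M) M ∩ {s | ε ≤ |s|}).Nonempty
      · have hKcpt : IsCompact (Icc (-M) M ∩ {s | ε ≤ |s|}) := by
          apply isCompact_Icc.inter_right
          have : {s : ℝ | ε ≤ |s|} = abs ⁻¹' (Ici ε) := rfl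
          rw [this]
          exact isClosed_Ici.preimage continuous_abs
        obtain ⟨x₀, hx₀mem, hx₀min⟩ := hKcpt.exists_isMinOn hKe
          (hVC2.continuous.continuousOn)
        have hc : 0 < V x₀ := by
          rcases (hVnn x₀).lt_or_eq with h | h
          · exact h
          · exfalso
            have hx0 : x₀ = 0 := (hVzero x₀).1 h.symm
            have := hx₀mem.2
            rw [hx0] at this
            simp only [mem_setOf_eq, abs_zero] at this
            linarith
        obtain ⟨N, hN⟩ := (Metric.tendsto_atTop.1 hVφ0) (V x₀) hc
        refine ⟨max N t₀, fun t ht => ?_⟩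
        have htN : N ≤ t := le_trans (le_max_left _ _) ht
        have htt₀ : t₀ ≤ t := le_trans (le_max_right _ _) ht
        rw [Real.dist_eq, sub_zero]
        by_contra hcon
        push_neg at hcon
        have hmem : φ t ∈ Icc (-M) M ∩ {s | ε ≤ |s|} := ⟨hM t htt₀, hcon⟩
        have h1 := hx₀min hmem
        have h2 := hN t htN
        rw [Real.dist_eq, sub_zero, abs_of_nonneg (hVnn (φ t))] at h2
        exact absurd (lt_of_le_of_lt h1 h2) (lt_irrefl _)
      · refine ⟨t₀, fun t ht => ?_⟩
        rw [Real.dist_eq, sub_zero]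
        by_contra hcon
        push_neg at hcon
        exact hKe ⟨φ t, hM t ht, hcon⟩
    · -- Hm > 0 : contradiction
      exfalso
      set h₀ : ℝ := H t₀ with hh₀def
      -- pointwise bounds
      have hy2 : ∀ t, t₀ ≤ t → (y t)^2 ≤ 6*h₀^2 := by
        intro t ht
        have := hEb t ht
        simp only [hEdef] at this
        linarith [hmnn t ht, hrnn t ht, hVnn (φ t)]
      set Y₀ : ℝ := 1 + 6*h₀^2 with hY₀def
      have hyb : ∀ t, t₀ ≤ t → |y t| ≤ Y₀ := by
        intro t ht
        nlinarith [hy2 t ht, sq_abs (y t), sq_nonneg (|y t| - 1), abs_nonneg (y t)]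
      have hρmb : ∀ t, t₀ ≤ t → ρm t ≤ 3*h₀^2 := by
        intro t ht
        have := hEb t ht
        simp only [hEdef] at this
        nlinarith [hrnn t ht, hVnn (φ t), sq_nonneg (y t)]
      have hρrb : ∀ t, t₀ ≤ t → ρr t ≤ 3*h₀^2 := by
        intro t ht
        have := hEb t ht
        simp only [hEdef] at this
        nlinarith [hmnn t ht, hVnn (φ t), sq_nonneg (y t)]
      -- bounds for deriv V and χ'/χ on the compact interval
      obtain ⟨CV, hCV⟩ := isCompact_Icc.exists_bound_of_continuousOn
        (hV'c.continuousOn : ContinuousOn (deriv V) (Icc (-M) M))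
      set CV₁ : ℝ := max CV 0 with hCV₁def
      have hCV₁ : ∀ t, t₀ ≤ t → |deriv V (φ t)| ≤ CV₁ := by
        intro t ht
        exact le_trans (hCV (φ t) (hM t ht)) (le_max_left _ _)
      obtain ⟨Cχ, hCχ⟩ := isCompact_Icc.exists_bound_of_continuousOn
        (hχ'c.continuousOn : ContinuousOn (fun s => deriv χ s / χ s) (Icc (-M) M))
      set Cχ₁ : ℝ := max Cχ 0 with hCχ₁def
      have hCχ₁ : ∀ t, t₀ ≤ t → |deriv χ (φ t) / χ (φ t)| ≤ Cχ₁ := by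
        intro t ht
        exact le_trans (hCχ (φ t) (hM t ht)) (le_max_left _ _)
      have hCV₁nn : 0 ≤ CV₁ := le_max_right _ _
      have hCχ₁nn : 0 ≤ Cχ₁ := le_max_right _ _
      have hh₀ : 0 < h₀ := hH0
      -- the dissipating quantity G
      set G : ℝ → ℝ := fun t => E t - V (φ t) with hGdef
      set G' : ℝ → ℝ := fun t => E' t - deriv V (φ t) * y t with hG'def
      have hGeq : ∀ t, G t = (1/2)*(y t)^2 + ρm t + ρr t := by
        intro t; simp only [hGdef, hEdef]; ring
      have hG : ∀ t, t₀ ≤ t → HasDerivAt G (G' t) t := by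
        intro t ht
        exact (hE t ht).sub (hVφ t ht)
      have hGnn : ∀ t, t₀ ≤ t → 0 ≤ G t := by
        intro t ht
        rw [hGeq t]
        nlinarith [hmnn t ht, hrnn t ht, sq_nonneg (y t)]
      set LG : ℝ := 48*h₀^3 + CV₁*Y₀ + 1 with hLGdef
      have hLGpos : 0 < LG := by positivity
      have hG'b : ∀ t, t₀ ≤ t → |G' t| ≤ LG := by
        intro t ht
        have hHt := hpos t ht
        have hHt' := hHle t ht
        have h1 : |E' t| ≤ 48*h₀^3 := by
          simp only [hE'def]
          rw [abs_mul]
          have hs : 0 ≤ 3*(y t)^2 + 3*γ*ρm t + 4*ρr t := by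
            nlinarith [hmnn t ht, hrnn t ht, sq_nonneg (y t)]
          rw [abs_of_nonneg hs, abs_neg, abs_of_pos hHt]
          have h2 : 3*(y t)^2 + 3*γ*ρm t + 4*ρr t ≤ 48*h₀^2 := by
            nlinarith [hy2 t ht, hρmb t ht, hρrb t ht, hmnn t ht, hrnn t ht]
          nlinarith
        have h3 : |deriv V (φ t) * y t| ≤ CV₁ * Y₀ := by
          rw [abs_mul]
          exact mul_le_mul (hCV₁ t ht) (hyb t ht) (abs_nonneg _) hCV₁nn
        calc |G' t| ≤ |E' t| + |deriv V (φ t) * y t| := by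
              simp only [hG'def]; exact abs_sub _ _
          _ ≤ LG := by rw [hLGdef]; linarith
      -- integral bound for G
      set m : ℝ := min γ 1 with hmdef
      have hmpos : 0 < m := lt_min hγ0 one_pos
      set W : ℝ → ℝ := fun t => -(1/2) * (γ * ρm t + (4/3) * ρr t + (y t)^2) with hWdef
      have hWcont : ∀ u v, t₀ ≤ u → u ≤ v → IntervalIntegrable W MeasureTheory.volume u v := by
        intro u v hu huv
        apply ContinuousOn.intervalIntegrable
        intro s hs
        rw [uIcc_of_le huv] at hs
        have hst : t₀ ≤ s := le_trans hu hs.1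
        exact (continuousAt_const.mul (((continuousAt_const.mul (hm s hst).continuousAt).add
          (continuousAt_const.mul (hr s hst).continuousAt)).add
          ((hy s hst).continuousAt.pow 2))).continuousWithinAt
      have hGcont : ∀ u v, t₀ ≤ u → u ≤ v → IntervalIntegrable G MeasureTheory.volume u v := by
        intro u v hu huv
        apply ContinuousOn.intervalIntegrable
        intro s hs
        rw [uIcc_of_le huv] at hs
        exact (hG s (le_trans hu hs.1)).continuousAt.continuousWithinAt
      set B : ℝ := (2/m) * h₀ with hBdef
      have hint : ∀ T, t₀ ≤ T → (∫ s in t₀..T, G s) ≤ B := by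
        intro T hT
        have hFTC : (∫ s in t₀..T, W s) = H T - H t₀ := by
          apply integral_eq_sub_of_hasDerivAt
          · intro s hs
            rw [uIcc_of_le hT] at hs
            exact hH s hs.1
          · exact hWcont t₀ T (le_refl _) hT
        have hmono : (∫ s in t₀..T, G s) ≤ ∫ s in t₀..T, (-2/m) * W s := by
          apply integral_mono_on hT (hGcont t₀ T (le_refl _) hT)
            ((hWcont t₀ T (le_refl _) hT).const_mul _)
          intro s hs
          have hst : t₀ ≤ s := hs.1
          rw [hGeq s]
          simp only [hWdef]
          have h1 : m ≤ γ := min_le_left _ _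
          have h2 : m ≤ 1 := min_le_right _ _
          have h3 : m * ((1/2)*(y s)^2 + ρm s + ρr s) ≤ γ * ρm s + (4/3) * ρr s + (y s)^2 := by
            nlinarith [hmnn s hst, hrnn s hst, sq_nonneg (y s)]
          have hm0 : m ≠ 0 := hmpos.ne'
          have h4 : -2/m * (-(1/2) * (γ * ρm s + (4/3) * ρr s + (y s) ^ 2))
              = (γ * ρm s + (4/3) * ρr s + (y s) ^ 2) / m := by
            field_simp
          rw [h4, le_div_iff₀ hmpos]
          nlinarith [h3]
        rw [integral_const_mul, hFTC] at hmono
        have hHT := hpos T hT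
        calc (∫ s in t₀..T, G s) ≤ -2/m * (H T - H t₀) := hmono
          _ ≤ B := by
            have hm0 : m ≠ 0 := hmpos.ne'
            have h5 : -2/m * (H T - H t₀) = (2*(H t₀ - H T))/m := by
              field_simp; ring
            have h6 : B = (2*h₀)/m := by rw [hBdef]; ring
            rw [h5, h6, div_le_div_iff_of_pos_right hmpos]
            linarith [hpos T hT]
      -- Barbalat : G → 0
      have hGten : Tendsto G atTop (nhds 0) :=
        barbalat G G' t₀ B LG hLGpos hGnn hG hG'b hint
      -- consequences : ρm → 0, y → 0
      have hρm0 : Tendsto ρm atTop (nhds 0) := by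
        apply tendsto_of_tendsto_of_tendsto_of_le_of_le' tendsto_const_nhds hGten
        · filter_upwards [eventually_ge_atTop t₀] with t ht using hmnn t ht
        · filter_upwards [eventually_ge_atTop t₀] with t ht
          rw [hGeq t]
          linarith only [hrnn t ht, sq_nonneg (y t)]
      have hy20 : Tendsto (fun t => (y t)^2) atTop (nhds 0) := by
        have h2G : Tendsto (fun t => 2 * G t) atTop (nhds 0) := by
          simpa using hGten.const_mul 2
        apply tendsto_of_tendsto_of_tendsto_of_le_of_le' tendsto_const_nhds h2G
        · filter_upwards with t using sq_nonneg (y t)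
        · filter_upwards [eventually_ge_atTop t₀] with t ht
          rw [hGeq t]
          linarith only [hrnn t ht, hmnn t ht]
      have hyabs0 : Tendsto (fun t => |y t|) atTop (nhds 0) := by
        have h1 : Tendsto (fun t => Real.sqrt ((y t)^2)) atTop (nhds (Real.sqrt 0)) :=
          (Real.continuous_sqrt.tendsto 0).comp hy20
        rw [Real.sqrt_zero] at h1
        apply h1.congr
        intro t
        exact Real.sqrt_sq_eq_abs (y t)
      have hy0 : Tendsto y atTop (nhds 0) := by
        have hneg : Tendsto (fun t => -|y t|) atTop (nhds 0) := by
          simpa using hyabs0.neg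
        exact tendsto_of_tendsto_of_tendsto_of_le_of_le hneg hyabs0
          (fun t => neg_abs_le (y t)) (fun t => le_abs_self (y t))
      -- V ∘ φ → 3 Hm² =: Lv > 0
      set Lv : ℝ := 3 * Hm^2 with hLvdef
      have hLvpos : 0 < Lv := by positivity
      have hVφlim : Tendsto (fun t => V (φ t)) atTop (nhds Lv) := by
        have := hEtendsto.sub hGten
        rw [sub_zero] at this
        apply this.congr
        intro t
        simp only [hGdef]
        ring
      -- eventually V(φ t) > Lv/2
      obtain ⟨T₁, hT₁⟩ := eventually_atTop.1
        ((hVφlim.eventually (eventually_gt_nhds (by linarith : Lv/2 < Lv))).and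
          (eventually_ge_atTop t₀))
      set T : ℝ := max T₁ t₀ with hTdef
      have hTt₀ : t₀ ≤ T := le_max_right _ _
      have hTp : ∀ t, T ≤ t → Lv/2 < V (φ t) ∧ t₀ ≤ t := by
        intro t ht
        exact hT₁ t (le_trans (le_max_left _ _) ht)
      -- φ(T) ≠ 0 and the sign persists
      have hφcont : ∀ u v, T ≤ u → ContinuousOn φ (Icc u v) := by
        intro u v hu
        intro s hs
        exact (hφ s (le_trans (le_trans hTt₀ hu) hs.1)).continuousAt.continuousWithinAt
      have hVzero' : ∀ s, T ≤ s → φ s ≠ 0 := by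
        intro s hs hc
        have := (hTp s hs).1
        rw [hc, (hVzero 0).2 rfl] at this
        linarith
      -- continuity of V at 0
      have hVcont0 : ∃ δ > 0, ∀ s : ℝ, |s| < δ → V s < Lv/2 := by
        have hc := hVC2.continuous.continuousAt (x := (0:ℝ))
        rw [Metric.continuousAt_iff] at hc
        obtain ⟨δ, hδpos, hδ⟩ := hc (Lv/2) (by linarith)
        refine ⟨δ, hδpos, fun s hs => ?_⟩
        have := hδ (by rwa [Real.dist_eq, sub_zero] : dist s 0 < δ)
        rw [Real.dist_eq, (hVzero 0).2 rfl, sub_zero] at this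
        exact lt_of_le_of_lt (le_abs_self _) this
      obtain ⟨δ, hδpos, hδ⟩ := hVcont0
      -- uniform contradiction machine
      have main : ∀ (σ c : ℝ), |σ| = 1 → 0 < c →
          (∀ t, T ≤ t → c ≤ σ * deriv V (φ t)) → False := by
        intro σ c hσ hcpos hVφ'
        set ε₁ : ℝ := c/(4*(3*h₀+1)) with hε₁def
        set ε₂ : ℝ := c/(8*(Cχ₁+1)) with hε₂def
        have hε₁pos : 0 < ε₁ := by positivity
        have hε₂pos : 0 < ε₂ := by positivity
        obtain ⟨T₂, hT₂⟩ := eventually_atTop.1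
          (((hyabs0.eventually (eventually_lt_nhds hε₁pos)).and
            (hρm0.eventually (eventually_lt_nhds hε₂pos))).and
            (eventually_ge_atTop T))
        set T' : ℝ := max T₂ T with hT'def
        have hT'T : T ≤ T' := le_max_right _ _
        have hT'p : ∀ t, T' ≤ t → (|y t| < ε₁ ∧ ρm t < ε₂) ∧ T ≤ t := by
          intro t ht
          exact hT₂ t (le_trans (le_max_left _ _) ht)
        have hbound : ∀ u, T' ≤ u →
            σ * (-3*H u*y u - deriv V (φ u) + (1/2)*(4-3*γ)*ρm u*(deriv χ (φ u) / χ (φ u)))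
              ≤ -(c/2) := by
          intro u hu
          obtain ⟨⟨hyu, hρmu⟩, hTu⟩ := hT'p u hu
          have ht₀u : t₀ ≤ u := (hTp u hTu).2
          have hHu := hpos u ht₀u
          have hHu' := hHle u ht₀u
          -- first term
          have hterm1 : |3*H u*y u| ≤ c/4 := by
            have h1 : |3*H u*y u| ≤ 3*h₀*|y u| := by
              rw [abs_mul, abs_mul, abs_of_nonneg (by norm_num : (0:ℝ) ≤ 3), abs_of_pos hHu]
              apply mul_le_mul_of_nonneg_right _ (abs_nonneg _)
              linarith only [hHu']
            have h2 : 3*h₀*|y u| ≤ 3*h₀*ε₁ := by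
              apply mul_le_mul_of_nonneg_left hyu.le (by positivity)
            have h3 : 3*h₀*ε₁ ≤ c/4 := by
              rw [hε₁def, mul_comm, div_mul_eq_mul_div,
                div_le_div_iff₀ (by positivity) (by norm_num)]
              nlinarith [hcpos.le, hh₀.le, mul_nonneg hcpos.le hh₀.le]
            linarith
          -- third term
          have h4γ : |4-3*γ| ≤ 4 := abs_le.2 ⟨by linarith, by linarith⟩
          have habs4 : (1/2) * |4-3*γ| ≤ 2 := by linarith only [h4γ]
          have hterm3 : |(1/2)*(4-3*γ)*ρm u*(deriv χ (φ u) / χ (φ u))| ≤ c/4 := by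
            have hr := hCχ₁ u ht₀u
            have s2 : (1/2)*|4-3*γ| * ρm u ≤ 2*ε₂ :=
              mul_le_mul habs4 hρmu.le (hmnn u ht₀u) (by norm_num)
            have s3 : ((1/2)*|4-3*γ| * ρm u) * |deriv χ (φ u) / χ (φ u)| ≤ (2*ε₂)*Cχ₁ :=
              mul_le_mul s2 hr (abs_nonneg _) (by positivity)
            have s4 : (2*ε₂)*Cχ₁ ≤ c/4 := by
              have hkey : 2*ε₂*(Cχ₁+1) = c/4 := by
                rw [hε₂def]
                field_simp
                ring
              linarith only [hkey, hε₂pos.le]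
            calc |(1/2)*(4-3*γ)*ρm u*(deriv χ (φ u) / χ (φ u))|
                = (1/2)*|4-3*γ| * ρm u * |deriv χ (φ u) / χ (φ u)| := by
                  rw [abs_mul, abs_mul, abs_mul, abs_of_nonneg (hmnn u ht₀u),
                    abs_of_nonneg (by norm_num : (0:ℝ) ≤ 1/2)]
              _ ≤ c/4 := le_trans s3 s4
          have habs_mul : ∀ x : ℝ, σ * x ≤ |x| := by
            intro x
            calc σ * x ≤ |σ * x| := le_abs_self _
              _ = |x| := by rw [abs_mul, hσ, one_mul]
          have hV' := hVφ' u hTu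
          have hterm1' : |-3*H u*y u| ≤ c/4 := by
            rwa [show (-3)*H u*y u = -(3*H u*y u) by ring, abs_neg]
          have e1 : σ * (-3*H u*y u) ≤ c/4 := le_trans (habs_mul _) hterm1'
          have e3 : σ * ((1/2)*(4-3*γ)*ρm u*(deriv χ (φ u) / χ (φ u))) ≤ c/4 :=
            le_trans (habs_mul _) hterm3
          have expand : σ * (-3*H u*y u - deriv V (φ u)
              + (1/2)*(4-3*γ)*ρm u*(deriv χ (φ u) / χ (φ u)))
              = σ * (-3*H u*y u) - σ * deriv V (φ u)
              + σ * ((1/2)*(4-3*γ)*ρm u*(deriv χ (φ u) / χ (φ u))) := by ring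
          rw [expand]
          linarith only [e1, e3, hV']
        -- apply the drift lemma to σ·y
        have hdrift := drift (fun u => σ * y u)
          (fun u => σ * (-3*H u*y u - deriv V (φ u)
            + (1/2)*(4-3*γ)*ρm u*(deriv χ (φ u) / χ (φ u)))) T' (c/2)
          (fun u hu => ((hy u (le_trans hTt₀ (le_trans hT'T hu)))).const_mul σ)
          (fun u hu => hbound u hu)
        obtain ⟨t, ⟨⟨htbig, hy1⟩, htT'⟩⟩ := (((eventually_ge_atTop (T' + (2/c)*(|y T'| + 2))).and
          (hyabs0.eventually (eventually_lt_nhds one_pos))).and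
          (eventually_ge_atTop T')).exists
        have h1 := hdrift t htT'
        have h2 : (2/c)*(|y T'| + 2) ≤ t - T' := by linarith only [htbig]
        have hq : (c/2)*((2/c)*(|y T'| + 2)) = |y T'| + 2 := by
          field_simp
        have h3 : |y T'| + 2 ≤ (c/2)*(t - T') := by
          rw [← hq]
          exact mul_le_mul_of_nonneg_left h2 (by positivity)
        have h4 : σ * y T' ≤ |y T'| := by
          calc σ * y T' ≤ |σ * y T'| := le_abs_self _
            _ = |y T'| := by rw [abs_mul, hσ, one_mul]
        have h5 : -|y t| ≤ σ * y t := by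
          have : |σ * y t| = |y t| := by rw [abs_mul, hσ, one_mul]
          rw [← this]
          exact neg_abs_le _
        linarith only [h1, h3, h4, h5, hy1]
      rcases lt_trichotomy (φ T) 0 with hφT | hφT | hφT
      · -- φ stays negative, bounded away from 0
        have hsign : ∀ t, T ≤ t → φ t < 0 := by
          intro t ht
          by_contra hc
          push_neg at hc
          obtain ⟨s, hs, hφs⟩ := intermediate_value_Icc ht (hφcont T t (le_refl T))
            (⟨hφT.le, hc⟩ : (0:ℝ) ∈ Icc (φ T) (φ t))
          exact hVzero' s hs.1 hφs
        have hδφ : ∀ t, T ≤ t → φ t ≤ -δ := by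
          intro t ht
          by_contra hc
          push_neg at hc
          have habs : |φ t| < δ := by
            rw [abs_lt]
            exact ⟨hc, lt_trans (hsign t ht) hδpos⟩
          exact absurd (hδ (φ t) habs) (not_lt.2 (hTp t ht).1.le)
        have hne : (Icc (-M) (-δ)).Nonempty :=
          ⟨φ T, (hM T hTt₀).1, hδφ T (le_refl T)⟩
        obtain ⟨x₀, hx₀mem, hx₀min⟩ := isCompact_Icc.exists_isMinOn hne
          ((hV'c.neg).continuousOn : ContinuousOn (fun s => -deriv V s) (Icc (-M) (-δ)))
        set c : ℝ := -deriv V x₀ with hcdef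
        have hcpos : 0 < c := by
          have hx0 : x₀ < 0 := lt_of_le_of_lt hx₀mem.2 (by linarith)
          have := hVdec x₀ hx0
          simp only [hcdef]
          linarith
        apply main (-1) c (by norm_num) hcpos
        intro t ht
        have hmem : φ t ∈ Icc (-M) (-δ) := ⟨(hM t (hTp t ht).2).1, hδφ t ht⟩
        have := hx₀min hmem
        rw [mem_setOf_eq] at this
        rw [Pi.neg_apply, Pi.neg_apply] at this
        linarith only [this, hcdef]
      · exact absurd hφT (hVzero' T (le_refl T))
      · -- φ stays positive
        have hsign : ∀ t, T ≤ t → 0 < φ t := by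
          intro t ht
          by_contra hc
          push_neg at hc
          obtain ⟨s, hs, hφs⟩ := intermediate_value_Icc' ht (hφcont T t (le_refl T))
            (⟨hc, hφT.le⟩ : (0:ℝ) ∈ Icc (φ t) (φ T))
          exact hVzero' s hs.1 hφs
        have hδφ : ∀ t, T ≤ t → δ ≤ φ t := by
          intro t ht
          by_contra hc
          push_neg at hc
          have habs : |φ t| < δ := by
            rw [abs_lt]
            exact ⟨lt_trans (neg_neg_of_pos hδpos) (hsign t ht), hc⟩
          exact absurd (hδ (φ t) habs) (not_lt.2 (hTp t ht).1.le)
        have hne : (Icc δ M).Nonempty :=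
          ⟨φ T, hδφ T (le_refl T), (hM T hTt₀).2⟩
        obtain ⟨x₀, hx₀mem, hx₀min⟩ := isCompact_Icc.exists_isMinOn hne
          (hV'c.continuousOn : ContinuousOn (deriv V) (Icc δ M))
        set c : ℝ := deriv V x₀ with hcdef
        have hcpos : 0 < c := hVinc x₀ (lt_of_lt_of_le hδpos hx₀mem.1)
        apply main 1 c (by norm_num) hcpos
        intro t ht
        have hmem : φ t ∈ Icc δ M := ⟨hδφ t ht, (hM t (hTp t ht).2).2⟩
        have := hx₀min hmem
        rw [mem_setOf_eq] at this
        try simp only at this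
        linarith only [this, hcdef]
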